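/- arXiv:1904.09125 — 8 statements merged into one kernel-verified Lean document; each statement's English description precedes it below -/
import Mathlib

section
/- For every k ≥ 1, a word w over {a,b} satisfies ScatFact_k(w) = Σ^k (the set of all words of length k over {a,b}) if and only if w has a scattered factor of length 2k lying in {ab, ba}^k (a concatenation of k blocks each equal to ab or ba). -/
def wa : Bool := false
def wb : Bool := true

/-- The set of scattered factors (subsequences) of `w` of length exactly `k`. -/
def ScatFact (k : ℕ) (w : List Bool) : Finset (List Bool) :=
  (w.sublists.filter (fun u => u.length = k)).toFinset

/-- `u` is a concatenation of `k` blocks, each equal to `ab` or `ba`. -/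
def AltBlocks (k : ℕ) (u : List Bool) : Prop :=
  ∃ blocks : List (List Bool), blocks.length = k ∧
    (∀ b ∈ blocks, b = [wa, wb] ∨ b = [wb, wa]) ∧ u = blocks.flatten

lemma mem_scatfact {k : ℕ} {w v : List Bool} :
    v ∈ ScatFact k w ↔ v.Sublist w ∧ v.length = k := by
  simp [ScatFact, List.mem_filter, List.mem_sublists]

lemma sublist_of_blocks (blocks : List (List Bool))
    (hb : ∀ b ∈ blocks, b = [wa, wb] ∨ b = [wb, wa]) :
    ∀ v : List Bool, v.length = blocks.length → v.Sublist blocks.flatten := by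
  induction blocks with
  | nil => intro v hv; simp at hv; simp [hv]
  | cons b bs ih =>
    intro v hv
    cases v with
    | nil => simp at hv
    | cons x t =>
      simp only [List.length_cons, Nat.succ_inj] at hv
      have hx : [x].Sublist b := by
        rcases hb b (by simp) with h | h <;> subst h <;> cases x <;> decide
      have := List.Sublist.append hx (ih (fun b' hb' => hb b' (by simp [hb'])) t hv)
      simpa using this

lemma cons_sublist_of_not_mem {x : Bool} {t p r : List Bool}
    (h : (x :: t).Sublist (p ++ r)) (hx : x ∉ p) : (x :: t).Sublist r := by
  induction p with
  | nil => simpa using h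
  | cons y p' ih =>
    simp only [List.mem_cons, not_or] at hx
    cases h with
    | cons _ h' => exact ih h' hx.2
    | cons_cons => exact absurd rfl hx.1

lemma forward : ∀ k, ∀ w : List Bool,
    (∀ v : List Bool, v.length = k → v.Sublist w) →
    ∃ u : List Bool, u.Sublist w ∧ u.length = 2 * k ∧ AltBlocks k u := by
  intro k
  induction k with
  | zero =>
    intro w _
    exact ⟨[], List.nil_sublist w, by simp, ⟨[], by simp⟩⟩
  | succ n ih =>
    intro w hw
    have hwa : wa ∈ w := (hw (List.replicate (n+1) wa) (by simp)).subset (by simp)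
    have hwb : wb ∈ w := (hw (List.replicate (n+1) wb) (by simp)).subset (by simp)
    cases w with
    | nil => simp at hwa
    | cons c w₀ =>
    set P : Bool → Bool := fun y => y == c with hP
    have hdecomp : c :: w₀ = (c :: w₀).takeWhile P ++ (c :: w₀).dropWhile P :=
      (List.takeWhile_append_dropWhile ..).symm
    have hnc : (!c) ∈ c :: w₀ := by
      cases c
      · simpa [wb] using hwb
      · simpa [wa] using hwa
    have hncp : (!c) ∉ (c :: w₀).takeWhile P := by
      intro hmem
      have := List.mem_takeWhile_imp hmem
      simp [hP] at this
    have hsne : (c :: w₀).dropWhile P ≠ [] := by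
      intro hnil
      rw [hdecomp, hnil, List.append_nil] at hnc
      exact hncp hnc
    obtain ⟨d, w', hs⟩ : ∃ d w', (c :: w₀).dropWhile P = d :: w' :=
      List.exists_cons_of_ne_nil hsne
    have hd : d = !c := by
      have hhd := List.head_dropWhile_not P (l := c :: w₀) hsne
      simp only [hs, List.head_cons] at hhd; simp only [hP] at hhd
      clear_value P; subst hP; cases c <;> cases d <;> revert hhd <;> decide
    have hcp : c ∈ (c :: w₀).takeWhile P := by
      have : (c :: w₀).takeWhile P = c :: w₀.takeWhile P := by
        rw [List.takeWhile_cons, if_pos (by simp [hP])]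
      simp [this]
    have hw' : ∀ v : List Bool, v.length = n → v.Sublist w' := by
      intro v hv
      have h1 : (d :: v).Sublist (c :: w₀) := hw _ (by simp [hv])
      rw [hdecomp, hs] at h1
      have h2 := cons_sublist_of_not_mem h1 (by rw [hd]; exact hncp)
      exact List.cons_sublist_cons.mp h2
    obtain ⟨u', hu'sub, hu'len, blocks', hb'len, hb'all, hu'join⟩ := ih w' hw'
    refine ⟨c :: d :: u', ?_, by simp [hu'len]; ring, ⟨[c, d] :: blocks', by simp [hb'len], ?_, by simp [hu'join]⟩⟩
    · rw [hdecomp, hs]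
      have h1 : [c, d].Sublist ((c :: w₀).takeWhile P ++ [d]) := by
        have : ([c] ++ [d]).Sublist ((c :: w₀).takeWhile P ++ [d]) :=
          List.Sublist.append (List.singleton_sublist.mpr hcp) (List.Sublist.refl _)
        simpa using this
      have := List.Sublist.append h1 hu'sub
      simpa using this
    · intro b hb
      rcases List.mem_cons.mp hb with hb | hb
      · subst hb; rw [hd]; cases c <;> simp [wa, wb]
      · exact hb'all _ hb

theorem scatfact_full_iff (k : ℕ) (hk : 1 ≤ k) (w : List Bool) :
    (∀ v : List Bool, v.length = k → v ∈ ScatFact k w) ↔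
      ∃ u : List Bool, u.Sublist w ∧ u.length = 2 * k ∧ AltBlocks k u := by
  constructor
  · intro h
    exact forward k w (fun v hv => (mem_scatfact.mp (h v hv)).1)
  · rintro ⟨u, husub, hulen, blocks, hblen, hball, hujoin⟩ v hv
    refine mem_scatfact.mpr ⟨?_, hv⟩
    have : v.Sublist blocks.flatten :=
      sublist_of_blocks blocks hball v (by rw [hblen, hv])
    rw [← hujoin] at this
    exact this.trans husub
end

section
/- For k ≥ 3, a strictly balanced word w of length 2k over {a,b} satisfies |ScatFact_k(w)| = k+1 if and only if w ∈ {a^k b^k, b^k a^k}. -/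
namespace SFAux

open List

lemma mem_scatfact {k : ℕ} {w u : List Bool} :
    u ∈ ScatFact k w ↔ u.Sublist w ∧ u.length = k := by
  simp [ScatFact, List.mem_filter, List.mem_sublists]

lemma length_eq_counts (l : List Bool) : l.length = l.count false + l.count true := by
  induction l with
  | nil => rfl
  | cons c t ih =>
    rw [List.length_cons, ih, List.count_cons, List.count_cons]
    cases c <;> simp <;> omega

lemma replicate_count_sublist (x : Bool) (l : List Bool) {p : ℕ} (hp : p ≤ l.count x) :
    (List.replicate p x).Sublist l := by
  have h1 : (List.replicate p x).Sublist (List.replicate (l.count x) x) :=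
    (List.replicate_sublist_replicate x).mpr hp
  refine h1.trans ?_
  rw [← List.filter_eq]
  exact List.filter_sublist

lemma mid_sublist (w₁ w₂ : List Bool) {p r : ℕ}
    (hp : p ≤ w₁.count true) (hr : r ≤ w₂.count true) :
    (List.replicate p true ++ false :: List.replicate r true).Sublist
      (w₁ ++ false :: w₂) :=
  (replicate_count_sublist true w₁ hp).append
    ((replicate_count_sublist true w₂ hr).cons₂ false)

lemma sorted_false_true :
    ∀ w : List Bool, ¬ ([true, false].Sublist w) →
      w = List.replicate (w.count false) false ++ List.replicate (w.count true) true := by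
  intro w
  induction w with
  | nil => intro _; simp
  | cons c t ih =>
    intro h
    cases c
    · -- head false
      have ht := ih (fun hs => h (hs.cons false))
      have e1 : (false :: t).count false = t.count false + 1 := by
        simp [List.count_cons]
      have e2 : (false :: t).count true = t.count true := by
        simp [List.count_cons]
      rw [e1, e2, List.replicate_succ, List.cons_append]
      exact congrArg (false :: ·) ht
    · -- head true: t contains no false
      have hmem : false ∉ t := by
        intro hm
        exact h (List.Sublist.cons₂ true (List.singleton_sublist.mpr hm))
      have ht : ∀ b ∈ t, b = true := by
        intro b hb; cases b
        · exact absurd hb hmem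
        · rfl
      have hcf : (true :: t).count false = 0 := by
        simp [List.count_cons, List.count_eq_zero.mpr hmem]
      have htr : t = List.replicate (t.count true) true := by
        rw [List.eq_replicate_iff]
        refine ⟨?_, ht⟩
        rw [List.count_eq_length.mpr (fun b hb => (ht b hb).symm)]
      rw [hcf, List.count_cons]
      simp only [if_pos rfl, List.replicate_zero, List.nil_append, List.replicate_succ]
      exact congrArg (true :: ·) htr

lemma sorted_true_false :
    ∀ w : List Bool, ¬ ([false, true].Sublist w) →
      w = List.replicate (w.count true) true ++ List.replicate (w.count false) false := by
  intro w
  induction w with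
  | nil => intro _; simp
  | cons c t ih =>
    intro h
    cases c
    · -- head false: t contains no true
      have hmem : true ∉ t := by
        intro hm
        exact h (List.Sublist.cons₂ false (List.singleton_sublist.mpr hm))
      have ht : ∀ b ∈ t, b = false := by
        intro b hb; cases b
        · rfl
        · exact absurd hb hmem
      have hcf : (false :: t).count true = 0 := by
        simp [List.count_cons, List.count_eq_zero.mpr hmem]
      have htr : t = List.replicate (t.count false) false := by
        rw [List.eq_replicate_iff]
        refine ⟨?_, ht⟩
        rw [List.count_eq_length.mpr (fun b hb => (ht b hb).symm)]
      rw [hcf, List.count_cons]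
      simp only [if_pos rfl, List.replicate_zero, List.nil_append, List.replicate_succ]
      exact congrArg (false :: ·) htr
    · -- head true
      have ht := ih (fun hs => h (hs.cons true))
      have e1 : (true :: t).count true = t.count true + 1 := by
        simp [List.count_cons]
      have e2 : (true :: t).count false = t.count false := by
        simp [List.count_cons]
      rw [e1, e2, List.replicate_succ, List.cons_append]
      exact congrArg (true :: ·) ht

lemma exists_decomp_of_pair (x : Bool) (w : List Bool) (h : [x, !x].Sublist w) :
    ∃ w₁ w₂, w = w₁ ++ (!x) :: w₂ ∧ 1 ≤ w₁.count x := by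
  rw [List.cons_sublist_iff] at h
  obtain ⟨r₁, r₂, rfl, hx, hs⟩ := h
  have hmem : (!x) ∈ r₂ := List.singleton_sublist.mp hs
  obtain ⟨s, t, rfl⟩ := List.append_of_mem hmem
  refine ⟨r₁ ++ s, t, by simp, ?_⟩
  have : 1 ≤ r₁.count x := List.one_le_count_iff.mpr hx
  rw [List.count_append]; omega

lemma exists_decomp_of_pair' (w : List Bool) (h : [false, true].Sublist w) :
    ∃ w₁ w₂, w = w₁ ++ false :: w₂ ∧ 1 ≤ w₂.count true := by
  rw [List.cons_sublist_iff] at h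
  obtain ⟨r₁, r₂, rfl, hx, hs⟩ := h
  obtain ⟨s, t, rfl⟩ := List.append_of_mem hx
  refine ⟨s, t ++ r₂, by simp, ?_⟩
  have hmem : true ∈ r₂ := List.singleton_sublist.mp hs
  have : 1 ≤ r₂.count true := List.one_le_count_iff.mpr hmem
  rw [List.count_append]; omega

/-- Two distinct single-`false` subsequences when `w` is not canonical. -/
lemma two_specials (k : ℕ) (hk : 2 ≤ k) (w : List Bool)
    (ha : w.count false = k) (hb : w.count true = k)
    (h1 : w ≠ List.replicate k false ++ List.replicate k true)
    (h2 : w ≠ List.replicate k true ++ List.replicate k false) :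
    ∃ p q, p < q ∧ q ≤ k - 1 ∧
      (List.replicate p true ++ false :: List.replicate (k-1-p) true).Sublist w ∧
      (List.replicate q true ++ false :: List.replicate (k-1-q) true).Sublist w := by
  have hpair1 : [true, false].Sublist w := by
    by_contra hcon
    have := sorted_false_true w hcon
    rw [ha, hb] at this
    exact h1 this
  have hpair2 : [false, true].Sublist w := by
    by_contra hcon
    have := sorted_true_false w hcon
    rw [ha, hb] at this
    exact h2 this
  obtain ⟨w₁, w₂, rfl, hx1⟩ := exists_decomp_of_pair true _ (by simpa using hpair1)
  set x := w₁.count true with hxdef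
  have hxy : x + w₂.count true = k := by
    rw [List.count_append, List.count_cons] at hb; simpa using hb
  by_cases hxle : x ≤ k - 1
  · refine ⟨x - 1, x, by omega, hxle, ?_, ?_⟩
    · exact mid_sublist w₁ w₂ (by omega) (by omega)
    · exact mid_sublist w₁ w₂ (by omega) (by omega)
  · -- x = k; use the second decomposition for a small p
    have hxk : x = k := by omega
    obtain ⟨u₁, u₂, hw, hy'⟩ := exists_decomp_of_pair' _ hpair2
    have hxy' : u₁.count true + u₂.count true = k := by
      rw [hw] at hb
      rw [List.count_append, List.count_cons] at hb; simpa using hb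
    set x' := u₁.count true with hx'def
    have hx'le : x' ≤ k - 1 := by omega
    refine ⟨min x' (k-2), k - 1, by omega, le_refl _, ?_, ?_⟩
    · rw [hw]
      exact mid_sublist u₁ u₂ (by omega) (by omega)
    · exact mid_sublist w₁ w₂ (by omega) (by omega)

lemma exists_sublist_counts :
    ∀ (l : List Bool) (i j : ℕ), i ≤ l.count false → j ≤ l.count true →
      ∃ u : List Bool, u.Sublist l ∧ u.count false = i ∧ u.count true = j := by
  intro l
  induction l with
  | nil =>
    intro i j hi hj
    simp only [List.count_nil, Nat.le_zero] at hi hj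
    exact ⟨[], by simp [hi, hj]⟩
  | cons c t ih =>
    intro i j hi hj
    cases c
    · -- head false
      have hj' : j ≤ t.count true := by
        simpa [List.count_cons] using hj
      cases i with
      | zero =>
        obtain ⟨u, hu, h1, h2⟩ := ih 0 j (Nat.zero_le _) hj'
        exact ⟨u, hu.cons false, h1, h2⟩
      | succ i' =>
        have hi' : i' ≤ t.count false := by
          have : i' + 1 ≤ t.count false + 1 := by
            simpa [List.count_cons] using hi
          omega
        obtain ⟨u, hu, h1, h2⟩ := ih i' j hi' hj'
        exact ⟨false :: u, hu.cons₂ false, by simp [List.count_cons, h1],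
          by simp [List.count_cons, h2]⟩
    · -- head true
      have hi' : i ≤ t.count false := by
        simpa [List.count_cons] using hi
      cases j with
      | zero =>
        obtain ⟨u, hu, h1, h2⟩ := ih i 0 hi' (Nat.zero_le _)
        exact ⟨u, hu.cons true, h1, h2⟩
      | succ j' =>
        have hj' : j' ≤ t.count true := by
          have : j' + 1 ≤ t.count true + 1 := by
            simpa [List.count_cons] using hj
          omega
        obtain ⟨u, hu, h1, h2⟩ := ih i j' hi' hj'
        exact ⟨true :: u, hu.cons₂ true, by simp [List.count_cons, h1],
          by simp [List.count_cons, h2]⟩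

lemma takeWhile_special (p : ℕ) (s : List Bool) :
    (List.replicate p true ++ false :: s).takeWhile id = List.replicate p true := by
  induction p with
  | zero => simp [List.takeWhile_cons]
  | succ n ih => simp [List.replicate_succ, List.takeWhile_cons, ih]

lemma special_ne {p q : ℕ} (hpq : p ≠ q) (s t : List Bool) :
    List.replicate p true ++ false :: s ≠ List.replicate q true ++ false :: t := by
  intro h
  have := congrArg (fun l => (l.takeWhile id).length) h
  simp only [takeWhile_special, List.length_replicate] at this
  exact hpq this

lemma special_count_false (p r : ℕ) :
    (List.replicate p true ++ false :: List.replicate r true).count false = 1 := by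
  simp [List.count_append, List.count_cons, List.count_replicate]

lemma special_length (p r : ℕ) :
    (List.replicate p true ++ false :: List.replicate r true).length = p + r + 1 := by
  simp; omega

/-- The key lower bound for non-canonical words. -/
lemma card_ge (k : ℕ) (hk : 2 ≤ k) (w : List Bool)
    (ha : w.count false = k) (hb : w.count true = k)
    (h1 : w ≠ List.replicate k false ++ List.replicate k true)
    (h2 : w ≠ List.replicate k true ++ List.replicate k false) :
    k + 2 ≤ (ScatFact k w).card := by
  obtain ⟨p, q, hpq, hqk, hsp, hsq⟩ := two_specials k hk w ha hb h1 h2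
  set Wp := List.replicate p true ++ false :: List.replicate (k-1-p) true with hWp
  set Wq := List.replicate q true ++ false :: List.replicate (k-1-q) true with hWq
  have hWpmem : Wp ∈ ScatFact k w := by
    rw [mem_scatfact]
    exact ⟨hsp, by rw [hWp, special_length]; omega⟩
  have hWqmem : Wq ∈ ScatFact k w := by
    rw [mem_scatfact]
    exact ⟨hsq, by rw [hWq, special_length]; omega⟩
  have hne : Wp ≠ Wq := special_ne (by omega) _ _
  have hsub : Finset.range (k+1) ⊆
      ((ScatFact k w).erase Wq).image (fun u => u.count false) := by
    intro i hi
    rw [Finset.mem_range] at hi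
    obtain ⟨u, hu, hcf, hct⟩ := exists_sublist_counts w i (k - i) (by omega) (by omega)
    have humem : u ∈ ScatFact k w := by
      rw [mem_scatfact]
      refine ⟨hu, ?_⟩
      rw [length_eq_counts, hcf, hct]; omega
    by_cases hquq : u = Wq
    · -- then i = 1; use Wp instead
      have hi1 : i = 1 := by
        rw [← hcf, hquq, hWq, special_count_false]
      rw [Finset.mem_image]
      refine ⟨Wp, Finset.mem_erase.mpr ⟨hne, hWpmem⟩, ?_⟩
      rw [hWp, special_count_false, hi1]
    · rw [Finset.mem_image]
      exact ⟨u, Finset.mem_erase.mpr ⟨hquq, humem⟩, hcf⟩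
  have h1' : k + 1 ≤ (((ScatFact k w).erase Wq).image (fun u => u.count false)).card := by
    calc k + 1 = (Finset.range (k+1)).card := by simp
    _ ≤ _ := Finset.card_le_card hsub
  have h2' := Finset.card_image_le (s := (ScatFact k w).erase Wq)
    (f := fun u => u.count false)
  have h3' := Finset.card_erase_of_mem hWqmem
  have h4' : 1 ≤ (ScatFact k w).card := Finset.card_pos.mpr ⟨Wq, hWqmem⟩
  omega

lemma scatfact_canonical (k : ℕ) (x : Bool) :
    ScatFact k (List.replicate k x ++ List.replicate k (!x)) =
      (Finset.range (k+1)).image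
        (fun i => List.replicate i x ++ List.replicate (k-i) (!x)) := by
  ext u
  rw [mem_scatfact, Finset.mem_image]
  constructor
  · rintro ⟨hsub, hlen⟩
    rw [List.sublist_append_iff] at hsub
    obtain ⟨u₁, u₂, rfl, hs1, hs2⟩ := hsub
    obtain ⟨i, hi, rfl⟩ := List.sublist_replicate_iff.mp hs1
    obtain ⟨j, hj, rfl⟩ := List.sublist_replicate_iff.mp hs2
    simp only [List.length_append, List.length_replicate] at hlen
    refine ⟨i, Finset.mem_range.mpr (by omega), ?_⟩
    have : j = k - i := by omega
    rw [this]
  · rintro ⟨i, hi, rfl⟩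
    rw [Finset.mem_range] at hi
    constructor
    · exact ((List.replicate_sublist_replicate x).mpr (by omega)).append
        ((List.replicate_sublist_replicate (!x)).mpr (by omega))
    · simp; omega

lemma card_canonical (k : ℕ) (x : Bool) :
    (ScatFact k (List.replicate k x ++ List.replicate k (!x))).card = k + 1 := by
  rw [scatfact_canonical]
  rw [Finset.card_image_of_injOn, Finset.card_range]
  intro i hi j hj hij
  rw [Finset.mem_coe, Finset.mem_range] at hi hj
  have hci := congrArg (fun l => l.count x) hij
  simp only [List.count_append, List.count_replicate] at hci
  have hxx : ((!x) == x) = false := by cases x <;> rfl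
  simpa [hxx] using hci

end SFAux

theorem scatfact_min_card_iff (k : ℕ) (hk : 3 ≤ k) (w : List Bool)
    (hlen : w.length = 2 * k) (ha : w.count wa = k) (hb : w.count wb = k) :
    (ScatFact k w).card = k + 1 ↔
      w = List.replicate k wa ++ List.replicate k wb ∨
      w = List.replicate k wb ++ List.replicate k wa := by
  have ha' : w.count false = k := ha
  have hb' : w.count true = k := hb
  constructor
  · intro hcard
    by_contra hcon
    push_neg at hcon
    obtain ⟨h1, h2⟩ := hcon
    have := SFAux.card_ge k (by omega) w ha' hb' (by simpa [wa, wb] using h1)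
      (by simpa [wa, wb] using h2)
    omega
  · rintro (rfl | rfl)
    · have := SFAux.card_canonical k false
      simpa [wa, wb] using this
    · have := SFAux.card_canonical k true
      simpa [wa, wb] using this
end

section
/- For k ≥ 3, there is no strictly balanced word w of length 2k over {a,b} whose k-spectrum has cardinality exactly k + 2. -/
lemma mem_ScatFact {k : ℕ} {w u : List Bool} :
    u ∈ ScatFact k w ↔ u.Sublist w ∧ u.length = k := by
  simp [ScatFact, List.mem_filter, List.mem_sublists]

lemma bool_cases (a b c : Bool) (hab : a ≠ b) : c = a ∨ c = b := by
  cases a <;> cases b <;> cases c <;> simp_all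

lemma count_count (a b : Bool) (hab : a ≠ b) (u : List Bool) :
    u.count a + u.count b = u.length := by
  induction u with
  | nil => simp
  | cons c t ih =>
    rcases bool_cases a b c hab with rfl | rfl <;>
      simp [List.count_cons, hab, Ne.symm hab] <;> omega

lemma count_cons_self (a : Bool) (t : List Bool) :
    (a :: t).count a = t.count a + 1 := by simp

lemma count_cons_ne (a b : Bool) (hab : a ≠ b) (t : List Bool) :
    (a :: t).count b = t.count b := by
  simp [List.count_cons, hab]

lemma exists_sub (a b : Bool) (hab : a ≠ b) :
    ∀ (w : List Bool) (j m : ℕ), j ≤ w.count a → m ≤ w.count b →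
      ∃ u : List Bool, u.Sublist w ∧ u.count a = j ∧ u.count b = m := by
  intro w
  induction w with
  | nil =>
    intro j m hj hm
    simp at hj hm
    exact ⟨[], List.Sublist.refl _, by simp [hj], by simp [hm]⟩
  | cons c t ih =>
    intro j m hj hm
    rcases bool_cases a b c hab with rfl | rfl
    · rw [count_cons_self] at hj
      rw [count_cons_ne _ _ hab] at hm
      cases j with
      | zero =>
        obtain ⟨u, h1, h2, h3⟩ := ih 0 m (Nat.zero_le _) hm
        exact ⟨u, h1.cons _, h2, h3⟩
      | succ j' =>
        obtain ⟨u, h1, h2, h3⟩ := ih j' m (by omega) hm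
        exact ⟨c :: u, h1.cons₂ _, by simp [h2], by
          rw [count_cons_ne _ _ hab]; exact h3⟩
    · rw [count_cons_self] at hm
      rw [count_cons_ne _ _ (Ne.symm hab)] at hj
      cases m with
      | zero =>
        obtain ⟨u, h1, h2, h3⟩ := ih j 0 hj (Nat.zero_le _)
        exact ⟨u, h1.cons _, h2, h3⟩
      | succ m' =>
        obtain ⟨u, h1, h2, h3⟩ := ih j m' hj (by omega)
        exact ⟨c :: u, h1.cons₂ _, by
          rw [count_cons_ne _ _ (Ne.symm hab)]; exact h2, by simp [h3]⟩

lemma rep_inj (a b : Bool) (hab : a ≠ b) :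
    ∀ (s s' : ℕ) (r r' : List Bool),
      List.replicate s b ++ a :: r = List.replicate s' b ++ a :: r' → s = s' := by
  intro s
  induction s with
  | zero =>
    intro s' r r' h
    cases s' with
    | zero => rfl
    | succ n =>
      rw [List.replicate_succ] at h
      simp at h
      exact absurd h.1 hab
  | succ n ih =>
    intro s' r r' h
    cases s' with
    | zero =>
      rw [List.replicate_succ] at h
      simp at h
      exact absurd h.1.symm hab
    | succ m =>
      rw [List.replicate_succ, List.replicate_succ] at h
      simp at h
      exact congrArg Nat.succ (ih m r r' h)

/-- The canonical word with one `a` at position `s` among `k-1` copies of `b`. -/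
def oneWord (k : ℕ) (a b : Bool) (s : ℕ) : List Bool :=
  List.replicate s b ++ a :: List.replicate (k - 1 - s) b

lemma oneWord_inj (k : ℕ) (a b : Bool) (hab : a ≠ b) {s s' : ℕ}
    (h : oneWord k a b s = oneWord k a b s') : s = s' :=
  rep_inj a b hab s s' _ _ h

lemma oneWord_count_a (k : ℕ) (a b : Bool) (hab : a ≠ b) (s : ℕ) :
    (oneWord k a b s).count a = 1 := by
  simp [oneWord, List.count_append, List.count_replicate, Ne.symm hab]

lemma oneWord_count_b (k : ℕ) (a b : Bool) (hab : a ≠ b) (s : ℕ) (hs : s ≤ k - 1) :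
    (oneWord k a b s).count b = k - 1 := by
  simp [oneWord, List.count_append, List.count_replicate, List.count_cons, hab]
  omega

lemma oneWord_sublist (k : ℕ) (a b : Bool) (w x z : List Bool)
    (hw : w = x ++ a :: z) (s : ℕ) (hs : s ≤ x.count b)
    (hz : k - 1 - s ≤ z.count b) :
    (oneWord k a b s).Sublist w := by
  subst hw
  exact List.Sublist.append (List.replicate_sublist_iff.mpr hs)
    (List.Sublist.cons₂ _ (List.replicate_sublist_iff.mpr hz))

lemma split_ba (a b : Bool) (w : List Bool) (h : [b, a].Sublist w) :
    ∃ x z : List Bool, w = x ++ a :: z ∧ 1 ≤ x.count b := by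
  rw [List.cons_sublist_iff] at h
  obtain ⟨r₁, r₂, rfl, hb, ha⟩ := h
  rw [List.singleton_sublist] at ha
  obtain ⟨p, z, rfl⟩ := List.append_of_mem ha
  refine ⟨r₁ ++ p, z, by simp, ?_⟩
  have : 0 < r₁.count b := List.count_pos_iff.mpr hb
  rw [List.count_append]; omega

lemma split_ab (a b : Bool) (w : List Bool) (h : [a, b].Sublist w) :
    ∃ x z : List Bool, w = x ++ a :: z ∧ 1 ≤ z.count b := by
  rw [List.cons_sublist_iff] at h
  obtain ⟨r₁, r₂, rfl, ha, hb⟩ := h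
  rw [List.singleton_sublist] at hb
  obtain ⟨x, y, rfl⟩ := List.append_of_mem ha
  refine ⟨x, y ++ r₂, by simp, ?_⟩
  have : 0 < r₂.count b := List.count_pos_iff.mpr hb
  rw [List.count_append]; omega

lemma two_ones (k : ℕ) (hk : 2 ≤ k) (a b : Bool) (hab : a ≠ b) (w : List Bool)
    (hca : w.count a = k) (hcb : w.count b = k)
    (h1 : [b, a].Sublist w) (h2 : [a, b].Sublist w) :
    ∃ u v : List Bool, u ≠ v ∧ u.Sublist w ∧ u.count a = 1 ∧ u.count b = k - 1 ∧
      v.Sublist w ∧ v.count a = 1 ∧ v.count b = k - 1 := by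
  obtain ⟨x₁, z₁, hw₁, hT₁⟩ := split_ba a b w h1
  have hsum₁ : x₁.count b + z₁.count b = k := by
    rw [hw₁, List.count_append, count_cons_ne _ _ hab] at hcb
    omega
  set T := x₁.count b with hT
  by_cases hT' : 1 ≤ z₁.count b
  · -- both U(T-1) and U(T)
    refine ⟨oneWord k a b (T - 1), oneWord k a b T, ?_, ?_, ?_, ?_, ?_, ?_, ?_⟩
    · intro h; have := oneWord_inj k a b hab h; omega
    · exact oneWord_sublist k a b w x₁ z₁ hw₁ (T - 1) (by omega) (by omega)
    · exact oneWord_count_a k a b hab _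
    · exact oneWord_count_b k a b hab _ (by omega)
    · exact oneWord_sublist k a b w x₁ z₁ hw₁ T (by omega) (by omega)
    · exact oneWord_count_a k a b hab _
    · exact oneWord_count_b k a b hab _ (by omega)
  · -- T = k; use second split
    have hTk : T = k := by omega
    obtain ⟨x₂, z₂, hw₂, hT₂'⟩ := split_ab a b w h2
    have hsum₂ : x₂.count b + z₂.count b = k := by
      rw [hw₂, List.count_append, count_cons_ne _ _ hab] at hcb
      omega
    set T₂ := x₂.count b with hT2
    by_cases hc : T₂ ≤ k - 2
    · refine ⟨oneWord k a b (k - 1), oneWord k a b T₂, ?_, ?_, ?_, ?_, ?_, ?_, ?_⟩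
      · intro h; have := oneWord_inj k a b hab h; omega
      · exact oneWord_sublist k a b w x₁ z₁ hw₁ (k - 1) (by omega) (by omega)
      · exact oneWord_count_a k a b hab _
      · exact oneWord_count_b k a b hab _ (by omega)
      · exact oneWord_sublist k a b w x₂ z₂ hw₂ T₂ (by omega) (by omega)
      · exact oneWord_count_a k a b hab _
      · exact oneWord_count_b k a b hab _ (by omega)
    · -- T₂ = k - 1
      have hT2k : T₂ = k - 1 := by omega
      refine ⟨oneWord k a b (k - 1), oneWord k a b (k - 2), ?_, ?_, ?_, ?_, ?_, ?_, ?_⟩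
      · intro h; have := oneWord_inj k a b hab h; omega
      · exact oneWord_sublist k a b w x₁ z₁ hw₁ (k - 1) (by omega) (by omega)
      · exact oneWord_count_a k a b hab _
      · exact oneWord_count_b k a b hab _ (by omega)
      · exact oneWord_sublist k a b w x₂ z₂ hw₂ (k - 2) (by omega) (by omega)
      · exact oneWord_count_a k a b hab _
      · exact oneWord_count_b k a b hab _ (by omega)

lemma no_ba (a b : Bool) (hab : a ≠ b) :
    ∀ w : List Bool, ¬ ([b, a].Sublist w) →
      w = List.replicate (w.count a) a ++ List.replicate (w.count b) b := by
  intro w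
  induction w with
  | nil => intro _; simp
  | cons c t ih =>
    intro h
    have ht : ¬ ([b, a].Sublist t) := fun hs => h (hs.cons c)
    rcases bool_cases a b c hab with rfl | rfl
    · rw [count_cons_self, count_cons_ne _ _ hab, List.replicate_succ]
      simpa using ih ht
    · have hna : a ∉ t := by
        intro hmem
        exact h (List.Sublist.cons₂ _ (List.singleton_sublist.mpr hmem))
      have hca : t.count a = 0 := List.count_eq_zero.mpr hna
      have h0 : (c :: t).count a = 0 := by
        rw [count_cons_ne _ _ (Ne.symm hab)]; exact hca
      rw [h0, count_cons_self, List.replicate_succ]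
      have := ih ht
      rw [hca] at this
      simpa using this

lemma card_triv (k : ℕ) (a b : Bool) :
    (ScatFact k (List.replicate k a ++ List.replicate k b)).card ≤ k + 1 := by
  have hsub : ScatFact k (List.replicate k a ++ List.replicate k b) ⊆
      (Finset.range (k + 1)).image
        (fun i => List.replicate i a ++ List.replicate (k - i) b) := by
    intro u hu
    rw [mem_ScatFact] at hu
    obtain ⟨hs, hl⟩ := hu
    rw [List.sublist_append_iff] at hs
    obtain ⟨u1, u2, rfl, h1, h2⟩ := hs
    rw [List.sublist_replicate_iff] at h1 h2
    obtain ⟨i, hi, rfl⟩ := h1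
    obtain ⟨j, hj, rfl⟩ := h2
    simp only [List.length_append, List.length_replicate] at hl
    refine Finset.mem_image.mpr ⟨i, Finset.mem_range.mpr (by omega), ?_⟩
    congr 1
    congr 1
    omega
  calc (ScatFact k (List.replicate k a ++ List.replicate k b)).card
      ≤ _ := Finset.card_le_card hsub
    _ ≤ (Finset.range (k + 1)).card := Finset.card_image_le
    _ = k + 1 := Finset.card_range _

lemma sum_lb (s : Finset ℕ) (f : ℕ → ℕ) (h1 : ∀ i ∈ s, 1 ≤ f i)
    (i1 i2 : ℕ) (hi1 : i1 ∈ s) (hi2 : i2 ∈ s) (hne : i1 ≠ i2)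
    (h2 : 2 ≤ f i1) (h3 : 2 ≤ f i2) :
    s.card + 2 ≤ ∑ i ∈ s, f i := by
  have hi2' : i2 ∈ s.erase i1 := Finset.mem_erase.mpr ⟨hne.symm, hi2⟩
  rw [← Finset.add_sum_erase s f hi1, ← Finset.add_sum_erase _ f hi2']
  have hrest : ((s.erase i1).erase i2).card ≤ ∑ i ∈ (s.erase i1).erase i2, f i := by
    simpa using Finset.card_nsmul_le_sum ((s.erase i1).erase i2) f 1
      (fun x hx => h1 x (Finset.mem_of_mem_erase (Finset.mem_of_mem_erase hx)))
  have hc1 : (s.erase i1).card = s.card - 1 := Finset.card_erase_of_mem hi1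
  have hc2 : ((s.erase i1).erase i2).card = (s.erase i1).card - 1 :=
    Finset.card_erase_of_mem hi2'
  have hcard2 : 2 ≤ s.card := Finset.one_lt_card.mpr ⟨i1, hi1, i2, hi2, hne⟩
  omega

theorem no_scatfact_card_k_add_two (k : ℕ) (hk : 3 ≤ k) :
    ¬ ∃ w : List Bool, w.length = 2 * k ∧ w.count wa = k ∧ w.count wb = k ∧
      (ScatFact k w).card = k + 2 := by
  rintro ⟨w, hlen, hfa, htb, hcard⟩
  have hfa' : w.count false = k := hfa
  have htb' : w.count true = k := htb
  by_cases h1 : [true, false].Sublist w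
  swap
  · have hw := no_ba false true (by decide) w h1
    rw [hfa', htb'] at hw
    have hle := card_triv k false true
    rw [← hw] at hle
    omega
  by_cases h2 : [false, true].Sublist w
  swap
  · have hw := no_ba true false (by decide) w h2
    rw [hfa', htb'] at hw
    have hle := card_triv k true false
    rw [← hw] at hle
    omega
  obtain ⟨u1, v1, huv1, hu1s, hu1a, hu1b, hv1s, hv1a, hv1b⟩ :=
    two_ones k (by omega) false true (by decide) w hfa' htb' h1 h2
  obtain ⟨u2, v2, huv2, hu2s, hu2a, hu2b, hv2s, hv2a, hv2b⟩ :=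
    two_ones k (by omega) true false (by decide) w htb' hfa' h2 h1
  set S := ScatFact k w with hS
  have hfib : S.card = ∑ j ∈ Finset.range (k + 1),
      (S.filter (fun u => u.count false = j)).card := by
    apply Finset.card_eq_sum_card_fiberwise
    intro u hu
    rw [Finset.mem_coe, hS, mem_ScatFact] at hu
    refine Finset.mem_range.mpr ?_
    have := List.count_le_length (a := false) (l := u)
    omega
  have hmemS : ∀ u : List Bool, u.Sublist w → u.count false = 1 →
      u.count true = k - 1 → u ∈ S.filter (fun u => u.count false = 1) := by
    intro u hus hua hub
    refine Finset.mem_filter.mpr ⟨mem_ScatFact.mpr ⟨hus, ?_⟩, hua⟩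
    have := count_count false true (by decide) u
    omega
  have hmemS' : ∀ u : List Bool, u.Sublist w → u.count true = 1 →
      u.count false = k - 1 → u ∈ S.filter (fun u => u.count false = k - 1) := by
    intro u hus hua hub
    refine Finset.mem_filter.mpr ⟨mem_ScatFact.mpr ⟨hus, ?_⟩, hub⟩
    have := count_count false true (by decide) u
    omega
  have hones : ∀ j ∈ Finset.range (k + 1),
      1 ≤ (S.filter (fun u => u.count false = j)).card := by
    intro j hj
    rw [Finset.mem_range] at hj
    obtain ⟨u, hus, hua, hub⟩ := exists_sub false true (by decide) w j (k - j)
      (by omega) (by omega)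
    refine Finset.card_pos.mpr ⟨u, Finset.mem_filter.mpr
      ⟨mem_ScatFact.mpr ⟨hus, ?_⟩, hua⟩⟩
    have := count_count false true (by decide) u
    omega
  have h21 : 2 ≤ (S.filter (fun u => u.count false = 1)).card :=
    Finset.one_lt_card.mpr ⟨u1, hmemS u1 hu1s hu1a hu1b, v1, hmemS v1 hv1s hv1a hv1b, huv1⟩
  have h2k : 2 ≤ (S.filter (fun u => u.count false = k - 1)).card :=
    Finset.one_lt_card.mpr ⟨u2, hmemS' u2 hu2s hu2a hu2b, v2, hmemS' v2 hv2s hv2a hv2b, huv2⟩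
  have hsum := sum_lb (Finset.range (k + 1))
    (fun j => (S.filter (fun u => u.count false = j)).card) hones
    1 (k - 1) (Finset.mem_range.mpr (by omega)) (Finset.mem_range.mpr (by omega))
    (by omega) h21 h2k
  rw [Finset.card_range] at hsum
  beta_reduce at hsum
  omega
end

section
/- For k ≥ 3, the k-spectrum of the word a^{k-1} b a b^{k-1} has exactly 2k elements; explicitly, it equals { a^r b^s : r+s = k } ∪ { a^i b a b^{k-2-i} : 0 ≤ i ≤ k-2 }. -/
lemma mem_scatfact_iff (k : ℕ) (w u : List Bool) :
    u ∈ ScatFact k w ↔ u.Sublist w ∧ u.length = k := by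
  simp [ScatFact, List.mem_sublists]

lemma key (k : ℕ) (hk : 3 ≤ k) (u : List Bool) :
    u ∈ ScatFact k (List.replicate (k - 1) wa ++ [wb, wa] ++ List.replicate (k - 1) wb) ↔
      ((∃ r s : ℕ, r + s = k ∧ u = List.replicate r wa ++ List.replicate s wb) ∨
       (∃ i : ℕ, i ≤ k - 2 ∧
          u = List.replicate i wa ++ [wb, wa] ++ List.replicate (k - 2 - i) wb)) := by
  rw [mem_scatfact_iff]
  constructor
  · rintro ⟨hsub, hlen⟩
    rw [List.sublist_append_iff] at hsub
    obtain ⟨v, u3, rfl, hv, hu3⟩ := hsub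
    rw [List.sublist_append_iff] at hv
    obtain ⟨u1, u2, rfl, hu1, hu2⟩ := hv
    rw [List.sublist_replicate_iff] at hu1 hu3
    obtain ⟨p, hp, rfl⟩ := hu1
    obtain ⟨q, hq, rfl⟩ := hu3
    have h2 : u2 = [] ∨ u2 = [wb] ∨ u2 = [wa] ∨ u2 = [wb, wa] := by
      have := List.mem_sublists.2 hu2
      simp [List.sublists] at this
      tauto
    simp only [List.length_append, List.length_replicate] at hlen
    rcases h2 with rfl | rfl | rfl | rfl
    · simp only [List.length_nil] at hlen
      left; exact ⟨p, q, by omega, by simp⟩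
    · simp only [List.length_cons, List.length_nil] at hlen
      left; refine ⟨p, q + 1, by omega, ?_⟩
      rw [List.replicate_succ]; simp
    · simp only [List.length_cons, List.length_nil] at hlen
      left; refine ⟨p + 1, q, by omega, ?_⟩
      rw [List.replicate_succ' (n := p)]
    · simp only [List.length_cons, List.length_nil] at hlen
      right; refine ⟨p, by omega, ?_⟩
      have : k - 2 - p = q := by omega
      rw [this]
  · have hmid : ∀ m : List Bool, m.Sublist [wb, wa] →
        ∀ p q : ℕ, p ≤ k - 1 → q ≤ k - 1 →
        (List.replicate p wa ++ m ++ List.replicate q wb).Sublist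
          (List.replicate (k - 1) wa ++ [wb, wa] ++ List.replicate (k - 1) wb) := by
      intro m hm p q hp hq
      exact ((( List.replicate_sublist_replicate wa).2 hp).append hm).append
        ((List.replicate_sublist_replicate wb).2 hq)
    rintro (⟨r, s, hrs, rfl⟩ | ⟨i, hi, rfl⟩)
    · constructor
      · rcases Nat.eq_zero_or_pos s with rfl | hs
        · -- u = a^k, r = k
          have hr : r = k := by omega
          have : List.replicate r wa ++ (List.replicate 0 wb : List Bool)
              = List.replicate (k-1) wa ++ [wa] ++ List.replicate 0 wb := by
            rw [← List.replicate_succ' (n := k-1)]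
            congr 2; omega
          rw [this]
          exact hmid [wa] (by simp) (k-1) 0 le_rfl (by omega)
        · have : List.replicate r wa ++ List.replicate s wb
              = List.replicate r wa ++ [wb] ++ List.replicate (s-1) wb := by
            rw [List.append_assoc]
            rw [List.singleton_append, ← List.replicate_succ]
            congr 2; omega
          rw [this]
          exact hmid [wb] (by simp) r (s-1) (by omega) (by omega)
      · simp only [List.length_append, List.length_replicate]; omega
    · constructor
      · exact hmid [wb, wa] (by simp) i (k-2-i) (by omega) (by omega)
      · simp; omega

theorem scatfact_ak1_b_a_bk1 (k : ℕ) (hk : 3 ≤ k) :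
    (∀ u : List Bool,
      u ∈ ScatFact k (List.replicate (k - 1) wa ++ [wb, wa] ++ List.replicate (k - 1) wb) ↔
        ((∃ r s : ℕ, r + s = k ∧ u = List.replicate r wa ++ List.replicate s wb) ∨
         (∃ i : ℕ, i ≤ k - 2 ∧
            u = List.replicate i wa ++ [wb, wa] ++ List.replicate (k - 2 - i) wb))) ∧
    (ScatFact k (List.replicate (k - 1) wa ++ [wb, wa] ++ List.replicate (k - 1) wb)).card
      = 2 * k := by
  refine ⟨key k hk, ?_⟩
  set f : ℕ → List Bool := fun r => List.replicate r wa ++ List.replicate (k - r) wb with hf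
  set g : ℕ → List Bool := fun i => List.replicate i wa ++ [wb, wa] ++ List.replicate (k - 2 - i) wb with hg
  have hset : ScatFact k (List.replicate (k - 1) wa ++ [wb, wa] ++ List.replicate (k - 1) wb)
      = (Finset.range (k+1)).image f ∪ (Finset.range (k-1)).image g := by
    ext u
    rw [key k hk u]
    simp only [Finset.mem_union, Finset.mem_image, Finset.mem_range]
    constructor
    · rintro (⟨r, s, hrs, rfl⟩ | ⟨i, hi, rfl⟩)
      · left
        refine ⟨r, by omega, ?_⟩
        show List.replicate r wa ++ List.replicate (k - r) wb = _
        rw [show k - r = s from by omega]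
      · right; exact ⟨i, by omega, rfl⟩
    · rintro (⟨r, hr, rfl⟩ | ⟨i, hi, rfl⟩)
      · left; exact ⟨r, k - r, by omega, rfl⟩
      · right; exact ⟨i, by omega, rfl⟩
  rw [hset]
  have countf : ∀ r, (f r).count wa = r := by
    intro r; simp [hf, wa, wb, List.count_replicate]
  have countg : ∀ i, (g i).count wa = i + 1 := by
    intro i; simp [hg, wa, wb, List.count_replicate]
  have hdisj : Disjoint ((Finset.range (k+1)).image f) ((Finset.range (k-1)).image g) := by
    rw [Finset.disjoint_left]
    rintro u hu hv
    simp only [Finset.mem_image, Finset.mem_range] at hu hv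
    obtain ⟨r, hr, rfl⟩ := hu
    obtain ⟨i, hi, heq⟩ := hv
    have hri : r = i + 1 := by
      have := congrArg (List.count wa) heq
      rw [countf, countg] at this; omega
    subst hri
    have h1 : (f (i+1))[i]? = some wa := by
      show (List.replicate (i+1) wa ++ List.replicate (k-(i+1)) wb)[i]? = some wa
      rw [List.getElem?_append_left (by simp)]
      simp
    have h2 : (g i)[i]? = some wb := by
      show ((List.replicate i wa ++ [wb, wa]) ++ List.replicate (k-2-i) wb)[i]? = some wb
      rw [List.getElem?_append_left (by simp),
          List.getElem?_append_right (by simp)]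
      simp
    rw [heq, h1] at h2
    simp [wa, wb] at h2
  rw [Finset.card_union_of_disjoint hdisj,
      Finset.card_image_of_injOn, Finset.card_image_of_injOn]
  · simp; omega
  · intro i _ j _ h
    have := congrArg (List.count wa) h
    rw [countg, countg] at this; omega
  · intro i _ j _ h
    have := congrArg (List.count wa) h
    rw [countf, countf] at this; omega
end

section
/- For k ≥ 3, the k-spectrum of the word a^{k-1} b^k a has exactly 2k elements; explicitly, it equals { a^r b^s : r+s = k } ∪ { a^i b^{k-1-i} a : 0 ≤ i ≤ k-2 }. -/
open List in
lemma sub_iff (m n : ℕ) (u : List Bool) :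
    u <+ List.replicate m wa ++ List.replicate n wb ++ [wa] ↔
    ∃ r s t, r ≤ m ∧ s ≤ n ∧ t ≤ 1 ∧
      u = List.replicate r wa ++ List.replicate s wb ++ List.replicate t wa := by
  constructor
  · intro h
    obtain ⟨l₁, l₂, hu, h1, h2⟩ := List.sublist_append_iff.1 h
    obtain ⟨v₁, v₂, hl1, hv1, hv2⟩ := List.sublist_append_iff.1 h1
    obtain ⟨r, hr, hv1'⟩ := List.sublist_replicate_iff.1 hv1
    obtain ⟨s, hs, hv2'⟩ := List.sublist_replicate_iff.1 hv2
    rcases List.sublist_singleton.1 h2 with h2' | h2'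
    · exact ⟨r, s, 0, hr, hs, by omega, by simp [hu, hl1, hv1', hv2', h2']⟩
    · exact ⟨r, s, 1, hr, hs, le_refl 1, by simp [hu, hl1, hv1', hv2', h2']⟩
  · rintro ⟨r, s, t, hr, hs, ht, rfl⟩
    refine List.Sublist.append (List.Sublist.append ?_ ?_) ?_
    · exact (List.replicate_sublist_replicate wa).2 hr
    · exact (List.replicate_sublist_replicate wb).2 hs
    · interval_cases t <;> simp

open List in
lemma mem_iff (k : ℕ) (hk : 3 ≤ k) (u : List Bool) :
    u ∈ ScatFact k (List.replicate (k - 1) wa ++ List.replicate k wb ++ [wa]) ↔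
      ((∃ r s : ℕ, r + s = k ∧ u = List.replicate r wa ++ List.replicate s wb) ∨
       (∃ i : ℕ, i ≤ k - 2 ∧
          u = List.replicate i wa ++ List.replicate (k - 1 - i) wb ++ [wa])) := by
  have hmem : u ∈ ScatFact k (List.replicate (k - 1) wa ++ List.replicate k wb ++ [wa]) ↔
      u <+ List.replicate (k - 1) wa ++ List.replicate k wb ++ [wa] ∧ u.length = k := by
    simp [ScatFact, List.mem_filter, List.mem_sublists]
  rw [hmem, sub_iff]
  constructor
  · rintro ⟨⟨r, s, t, hr, hs, ht, rfl⟩, hlen⟩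
    simp only [List.length_append, List.length_replicate] at hlen
    rcases Nat.le_one_iff_eq_zero_or_eq_one.1 ht with rfl | rfl
    · exact Or.inl ⟨r, s, by omega, by simp⟩
    · rcases Nat.eq_zero_or_pos s with rfl | hs1
      · refine Or.inl ⟨k, 0, by omega, ?_⟩
        have : r + 1 = k := by omega
        simp [← this, List.replicate_succ' (n := r) (a := wa)]
      · refine Or.inr ⟨r, by omega, ?_⟩
        have : k - 1 - r = s := by omega
        simp [this]
  · rintro (⟨r, s, hrs, rfl⟩ | ⟨i, hi, rfl⟩)
    · rcases Nat.lt_or_ge r k with hr | hr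
      · refine ⟨⟨r, s, 0, by omega, by omega, by omega, by simp⟩, by simp; omega⟩
      · have hs' : s = 0 := by omega
        subst hs'
        refine ⟨⟨k - 1, 0, 1, le_refl _, by omega, le_refl _, ?_⟩, by simp; omega⟩
        have h1 : r = (k - 1) + 1 := by omega
        rw [h1, List.replicate_succ' (n := k - 1) (a := wa)]
        simp
    · refine ⟨⟨i, k - 1 - i, 1, by omega, by omega, le_refl _, by simp⟩, ?_⟩
      simp; omega

theorem scatfact_ak1_bk_a (k : ℕ) (hk : 3 ≤ k) :
    (∀ u : List Bool,
      u ∈ ScatFact k (List.replicate (k - 1) wa ++ List.replicate k wb ++ [wa]) ↔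
        ((∃ r s : ℕ, r + s = k ∧ u = List.replicate r wa ++ List.replicate s wb) ∨
         (∃ i : ℕ, i ≤ k - 2 ∧
            u = List.replicate i wa ++ List.replicate (k - 1 - i) wb ++ [wa]))) ∧
    (ScatFact k (List.replicate (k - 1) wa ++ List.replicate k wb ++ [wa])).card
      = 2 * k := by
  refine ⟨mem_iff k hk, ?_⟩
  set A : Finset (List Bool) := (Finset.range (k + 1)).image
    (fun r => List.replicate r wa ++ List.replicate (k - r) wb) with hA
  set B : Finset (List Bool) := (Finset.range (k - 1)).image
    (fun i => List.replicate i wa ++ List.replicate (k - 1 - i) wb ++ [wa]) with hB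
  have hset : ScatFact k (List.replicate (k - 1) wa ++ List.replicate k wb ++ [wa]) = A ∪ B := by
    ext u
    rw [mem_iff k hk, Finset.mem_union, hA, hB]
    simp only [Finset.mem_image, Finset.mem_range]
    constructor
    · rintro (⟨r, s, hrs, rfl⟩ | ⟨i, hi, rfl⟩)
      · exact Or.inl ⟨r, by omega, by rw [show k - r = s by omega]⟩
      · exact Or.inr ⟨i, by omega, rfl⟩
    · rintro (⟨r, hr, rfl⟩ | ⟨i, hi, rfl⟩)
      · exact Or.inl ⟨r, k - r, by omega, rfl⟩
      · exact Or.inr ⟨i, by omega, rfl⟩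
  have countwa : ∀ r s : ℕ, (List.replicate r wa ++ List.replicate s wb).count wa = r := by
    intro r s
    simp [List.count_append, List.count_replicate, wa, wb]
  have hcardA : A.card = k + 1 := by
    rw [hA, Finset.card_image_of_injOn, Finset.card_range]
    intro r _ r' _ h
    have := congrArg (List.count wa) h
    simpa [countwa] using this
  have hcardB : B.card = k - 1 := by
    rw [hB, Finset.card_image_of_injOn, Finset.card_range]
    intro i _ i' _ h
    have := congrArg (List.count wa) h
    simp [List.count_append, List.count_replicate, wa, wb] at this
    omega
  have hdisj : Disjoint A B := by
    rw [Finset.disjoint_left]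
    rintro u hu hu'
    rw [hA, Finset.mem_image] at hu
    rw [hB, Finset.mem_image] at hu'
    obtain ⟨r, hr, rfl⟩ := hu
    obtain ⟨i, hi, heq⟩ := hu'
    simp only [Finset.mem_range] at hr hi
    -- compare count of wb and last element
    have hcb := congrArg (List.count wb) heq
    simp [List.count_append, List.count_replicate, wa, wb] at hcb
    have hlast := congrArg List.getLast? heq
    have h1 : k - 1 - i ≥ 1 := by omega
    rcases Nat.lt_or_ge r k with hrk | hrk
    · have h2 : k - r ≥ 1 := by omega
      rw [List.getLast?_concat] at hlast
      rw [List.getLast?_append_of_ne_nil] at hlast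
      · rw [List.getLast?_replicate] at hlast
        revert hlast
        simp [wa, wb]
      · simp; omega
    · -- r = k, so k - r = 0, count wb gives contradiction
      have : k - r = 0 := by omega
      omega
  rw [hset, Finset.card_union_of_disjoint hdisj, hcardA, hcardB]
  omega
end

section
/- For k ≥ 3 and 0 ≤ i ≤ k-2, the k-spectrum of the word w = (ab)^i a^2 b^2 (ab)^{k-i-2} equals Σ^k \ { b^{i+1} a^{k-i-1} }, and hence has cardinality 2^k − 1. -/
/-- `(ab)^n` : `n` repetitions of the word `ab`. -/
def abPow (n : ℕ) : List Bool := (List.replicate n ([wa, wb])).flatten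

open List in
lemma dummy_open : True := trivial

open List

lemma abPow_succ (n : ℕ) : abPow (n + 1) = false :: true :: abPow n := rfl

lemma abPow_length (n : ℕ) : (abPow n).length = 2 * n := by
  induction n with
  | zero => rfl
  | succ n ih => rw [abPow_succ]; simp [ih]; ring

lemma abPow_count_true (n : ℕ) : (abPow n).count true = n := by
  induction n with
  | zero => rfl
  | succ n ih => rw [abPow_succ]; simp [List.count_cons, ih]

lemma abPow_count_false (n : ℕ) : (abPow n).count false = n := by
  induction n with
  | zero => rfl
  | succ n ih => rw [abPow_succ]; simp [List.count_cons, ih]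

/-- Any word of length ≤ n is a subsequence of (ab)^n. -/
lemma sublist_abPow (n : ℕ) (u : List Bool) (h : u.length ≤ n) : u <+ abPow n := by
  induction n generalizing u with
  | zero =>
    have : u = [] := List.length_eq_zero_iff.mp (Nat.le_zero.mp h)
    simp [this]
  | succ n ih =>
    match u with
    | [] => exact List.nil_sublist _
    | x :: t =>
      have ht : t <+ abPow n := ih t (by simpa using Nat.succ_le_succ_iff.mp (by simpa using h))
      rw [abPow_succ]
      cases x with
      | false => exact (ht.cons true).cons₂ false
      | true => exact ((ht.cons₂ true)).cons false

/-- Any word of length ≤ n+1 is a subsequence of b (ab)^n a. -/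
lemma sublist_b_ab_a (n : ℕ) (t : List Bool) (h : t.length ≤ n + 1) :
    t <+ true :: (abPow n ++ [false]) := by
  induction n generalizing t with
  | zero =>
    match t with
    | [] => exact List.nil_sublist _
    | [false] => exact (List.Sublist.cons₂ false (List.nil_sublist _)).cons true
    | [true] => exact List.Sublist.cons₂ true (List.nil_sublist _)
    | x :: y :: s => simp at h
  | succ n ih =>
    match t with
    | [] => exact List.nil_sublist _
    | x :: s =>
      have hs : s <+ true :: (abPow n ++ [false]) :=
        ih s (by simpa using Nat.succ_le_succ_iff.mp (by simpa using h))
      rw [abPow_succ]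
      cases x with
      | false =>
        show false :: s <+ true :: (false :: (true :: (abPow n ++ [false])))
        exact (hs.cons₂ false).cons true
      | true =>
        show true :: s <+ true :: (false :: (true :: (abPow n ++ [false])))
        exact ((hs.cons false)).cons₂ true

/-- Any word of length i+1 containing an `a` is a subsequence of (ab)^i a. -/
lemma sublist_ab_a (i : ℕ) (u : List Bool) (hlen : u.length = i + 1) (ha : false ∈ u) :
    u <+ abPow i ++ [false] := by
  induction i generalizing u with
  | zero =>
    match u with
    | [x] =>
      simp at ha
      simp [ha]
    | [] => simp at hlen
    | x :: y :: s => simp at hlen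
  | succ i ih =>
    match u with
    | [] => simp at hlen
    | x :: t =>
      have hlt : t.length = i + 1 := by simpa using hlen
      rw [abPow_succ]
      cases x with
      | false =>
        have : t <+ true :: (abPow i ++ [false]) := sublist_b_ab_a i t (by omega)
        exact List.Sublist.cons₂ false this
      | true =>
        have hat : false ∈ t := by simpa using ha
        have := ih t hlt hat
        exact ((this.cons₂ true)).cons false

/-- Any word of length m+1 containing a `b` is a subsequence of b (ab)^m. -/
lemma sublist_b_ab (m : ℕ) (v : List Bool) (hlen : v.length = m + 1) (hb : true ∈ v) :
    v <+ true :: abPow m := by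
  induction m generalizing v with
  | zero =>
    match v with
    | [x] =>
      simp at hb
      simp [hb]
    | [] => simp at hlen
    | x :: y :: s => simp at hlen
  | succ m ih =>
    match v with
    | [] => simp at hlen
    | x :: t =>
      have hlt : t.length = m + 1 := by simpa using hlen
      rw [abPow_succ]
      cases x with
      | true =>
        have : t <+ abPow (m + 1) := sublist_abPow (m + 1) t (by omega)
        rw [abPow_succ] at this
        exact this.cons₂ true
      | false =>
        have hbt : true ∈ t := by simpa using hb
        have := ih t hlt hbt
        exact ((this.cons₂ false)).cons true

lemma wWord_eq (i m : ℕ) :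
    abPow i ++ [wa, wa, wb, wb] ++ abPow m
      = abPow i ++ [false, false, true, true] ++ abPow m := rfl

/-- positive direction -/
lemma pos_dir (i m : ℕ) (u : List Bool) (hlen : u.length = i + m + 2)
    (hne : u ≠ List.replicate (i + 1) true ++ List.replicate (m + 1) false) :
    u <+ abPow i ++ [false, false, true, true] ++ abPow m := by
  have hsplit : u = u.take (i + 1) ++ u.drop (i + 1) := (List.take_append_drop _ _).symm
  set x := u.take (i + 1) with hx
  set y := u.drop (i + 1) with hy
  have hxl : x.length = i + 1 := by rw [hx]; rw [List.length_take]; omega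
  have hyl : y.length = m + 1 := by rw [hy]; rw [List.length_drop]; omega
  by_cases hfa : false ∈ x
  · -- x contains an a
    have h1 : x <+ abPow i ++ [false] := sublist_ab_a i x hxl hfa
    have h2 : y <+ false :: true :: true :: abPow m := by
      have : y <+ abPow (m + 1) := sublist_abPow (m + 1) y (by omega)
      rw [abPow_succ] at this
      calc y <+ false :: true :: abPow m := this
        _ <+ false :: true :: true :: abPow m := by
            exact (((List.Sublist.refl _).cons true).cons₂ true).cons₂ false
    have : x ++ y <+ (abPow i ++ [false]) ++ (false :: true :: true :: abPow m) :=
      List.Sublist.append h1 h2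
    rw [← hsplit] at this
    have heq : (abPow i ++ [false]) ++ (false :: true :: true :: abPow m)
        = abPow i ++ [false, false, true, true] ++ abPow m := by simp
    rwa [heq] at this
  · -- x = b^(i+1)
    have hxeq : x = List.replicate (i + 1) true := by
      rw [← hxl]
      apply List.eq_replicate_of_mem
      intro b hb
      cases b with
      | false => exact absurd hb hfa
      | true => rfl
    have hxeq' : x = List.replicate (i + 1) true := hxeq
    have hyne : y ≠ List.replicate (m + 1) false := by
      intro h
      apply hne
      rw [hsplit, hxeq, h]
    have hbt : true ∈ y := by
      by_contra htb
      apply hyne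
      rw [← hyl]
      apply List.eq_replicate_of_mem
      intro b hb
      cases b with
      | true => exact absurd hb htb
      | false => rfl
    have h2 : y <+ true :: abPow m := sublist_b_ab m y hyl hbt
    have h1 : x <+ abPow i ++ [false, false, true] := by
      rw [hxeq]
      have : List.replicate (i + 1) true = List.replicate i true ++ [true] := by
        rw [← List.replicate_succ' ]
      rw [this]
      apply List.Sublist.append
      · exact sublist_abPow i _ (by simp)
      · exact ((List.Sublist.cons₂ true (List.nil_sublist _)).cons false).cons false
    have : x ++ y <+ (abPow i ++ [false, false, true]) ++ (true :: abPow m) :=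
      List.Sublist.append h1 h2
    rw [← hsplit] at this
    have heq : (abPow i ++ [false, false, true]) ++ (true :: abPow m)
        = abPow i ++ [false, false, true, true] ++ abPow m := by simp
    rwa [heq] at this

/-- negative direction -/
lemma neg_dir (i m : ℕ) :
    ¬ (List.replicate (i + 1) true ++ List.replicate (m + 1) false
        <+ abPow i ++ [false, false, true, true] ++ abPow m) := by
  intro h
  rw [List.append_sublist_iff] at h
  obtain ⟨r₁, r₂, hw, h1, h2⟩ := h
  set w := abPow i ++ [false, false, true, true] ++ abPow m with hwdef
  have hc1 : i + 1 ≤ r₁.count true := by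
    have := h1.count_le true
    simpa using this
  have hc2 : m + 1 ≤ r₂.count false := by
    have := h2.count_le false
    simpa using this
  have hr1 : r₁ = w.take r₁.length := by rw [hw]; rw [List.take_left]
  have hr2 : r₂ = w.drop r₁.length := by rw [hw]; simp
  have htake : w.take (2 * i + 2) = abPow i ++ [false, false] := by
    rw [hwdef]
    rw [List.append_assoc, List.take_append, abPow_length]
    have : 2 * i + 2 - 2 * i = 2 := by omega
    rw [List.take_of_length_le (by rw [abPow_length]; omega), this]
    rfl
  have hdrop : w.drop (2 * i + 2) = true :: true :: abPow m := by
    rw [hwdef]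
    rw [List.append_assoc, List.drop_append, abPow_length]
    have : 2 * i + 2 - 2 * i = 2 := by omega
    rw [List.drop_of_length_le (by rw [abPow_length]; omega), this]
    rfl
  by_cases hn : r₁.length ≤ 2 * i + 2
  · have : r₁ <+ w.take (2 * i + 2) := by
      rw [hr1]
      have h := List.take_sublist r₁.length (w.take (2 * i + 2))
      rwa [List.take_take, min_eq_left hn] at h
    have hcount := this.count_le true
    rw [htake] at hcount
    simp [List.count_append, abPow_count_true] at hcount
    omega
  · push_neg at hn
    have : r₂ <+ w.drop (2 * i + 2) := by
      rw [hr2]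
      have : w.drop r₁.length = (w.drop (2 * i + 2)).drop (r₁.length - (2 * i + 2)) := by
        rw [List.drop_drop]
        congr 1
        omega
      rw [this]
      exact List.drop_sublist _ _
    have hcount := this.count_le false
    rw [hdrop] at hcount
    simp [List.count_cons, abPow_count_false] at hcount
    omega

theorem scatfact_two_pow_sub_one (k i : ℕ) (hk : 3 ≤ k) (hi : i ≤ k - 2) :
    (∀ u : List Bool,
      u ∈ ScatFact k (abPow i ++ [wa, wa, wb, wb] ++ abPow (k - i - 2)) ↔
        (u.length = k ∧
          u ≠ List.replicate (i + 1) wb ++ List.replicate (k - i - 1) wa)) ∧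
    (ScatFact k (abPow i ++ [wa, wa, wb, wb] ++ abPow (k - i - 2))).card
      = 2 ^ k - 1 := by
  set m := k - i - 2 with hm
  have hkm : k = i + m + 2 := by omega
  have hki : k - i - 1 = m + 1 := by omega
  have hmem : ∀ u : List Bool,
      u ∈ ScatFact k (abPow i ++ [wa, wa, wb, wb] ++ abPow m) ↔
        (u.length = k ∧
          u ≠ List.replicate (i + 1) wb ++ List.replicate (k - i - 1) wa) := by
    intro u
    rw [wWord_eq]
    constructor
    · rintro hu
      simp only [ScatFact, List.mem_toFinset, List.mem_filter, List.mem_sublists,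
        decide_eq_true_eq] at hu
      refine ⟨hu.2, ?_⟩
      intro heq
      apply neg_dir i m
      rw [hki] at heq
      simp only [wa, wb] at heq
      rw [← heq]
      exact hu.1
    · rintro ⟨hlen, hne⟩
      simp only [ScatFact, List.mem_toFinset, List.mem_filter, List.mem_sublists,
        decide_eq_true_eq]
      refine ⟨?_, hlen⟩
      apply pos_dir i m u (by omega)
      rw [hki] at hne
      simp only [wa, wb] at hne
      exact hne
  refine ⟨hmem, ?_⟩
  -- cardinality
  classical
  set e : List Bool := List.replicate (i + 1) wb ++ List.replicate (k - i - 1) wa with he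
  have hel : e.length = k := by simp [he]; omega
  set T : Finset (List Bool) :=
    Finset.image (fun f : Fin k → Bool => List.ofFn f) Finset.univ with hT
  have hmemT : ∀ u : List Bool, u ∈ T ↔ u.length = k := by
    intro u
    simp only [hT, Finset.mem_image, Finset.mem_univ, true_and]
    constructor
    · rintro ⟨f, rfl⟩; simp
    · intro hl
      refine ⟨fun j => u[(j : ℕ)]'(by omega), ?_⟩
      apply List.ext_getElem
      · simp [hl]
      · intro n h1 h2
        simp
  have hS : ScatFact k (abPow i ++ [wa, wa, wb, wb] ++ abPow m) = T.erase e := by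
    ext u
    rw [hmem u, Finset.mem_erase, hmemT u]
    tauto
  rw [hS, Finset.card_erase_of_mem (by rw [hmemT]; exact hel)]
  rw [hT, Finset.card_image_of_injective _ List.ofFn_injective]
  simp
end

section
/- For every even k ≥ 4, the k-spectrum of the word a^{k/2} b^k a^{k/2} has cardinality exactly (k/2 + 1)². -/
lemma takeWhile_rep (i j l : ℕ) (hj : 0 < j) :
    ((List.replicate i wa ++ (List.replicate j wb ++ List.replicate l wa)).takeWhile
      (· == wa)) = List.replicate i wa := by
  obtain ⟨j', rfl⟩ : ∃ j', j = j' + 1 := ⟨j - 1, by omega⟩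
  induction i with
  | zero => simp [List.replicate_succ, List.takeWhile_cons, wa, wb]
  | succ i ih =>
    have hpa : (wa == wa) = true := by simp
    rw [List.replicate_succ, List.cons_append, List.takeWhile_cons, if_pos hpa, ih]

lemma count_rep (c : Bool) (i j l : ℕ) :
    (List.replicate i wa ++ (List.replicate j wb ++ List.replicate l wa)).count c
      = (if c = wa then i + l else j) := by
  simp only [List.count_append, List.count_replicate]
  cases c <;> simp [wa, wb]

theorem scatfact_square (k : ℕ) (hk : 4 ≤ k) (heven : Even k) :
    (ScatFact k (List.replicate (k / 2) wa ++ List.replicate k wb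
        ++ List.replicate (k / 2) wa)).card = (k / 2 + 1) ^ 2 := by
  set m := k / 2 with hmdef
  have hkm : k = m + m := by obtain ⟨r, hr⟩ := heven; omega
  set f : ℕ × ℕ → List Bool := fun p =>
    List.replicate p.1 wa ++ (List.replicate (k - p.1 - p.2) wb ++ List.replicate p.2 wa)
    with hf
  have hset : ScatFact k (List.replicate m wa ++ List.replicate k wb ++ List.replicate m wa)
      = (Finset.Iic m ×ˢ Finset.Iic m).image f := by
    ext u
    simp only [ScatFact, List.mem_toFinset, List.mem_filter, List.mem_sublists,
      Finset.mem_image, Finset.mem_product, Finset.mem_Iic, decide_eq_true_eq]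
    constructor
    · rintro ⟨hsub, hlen⟩
      rw [List.append_assoc, List.sublist_append_iff] at hsub
      obtain ⟨u1, rest, rfl, h1, hrest⟩ := hsub
      rw [List.sublist_append_iff] at hrest
      obtain ⟨u2, u3, rfl, h2, h3⟩ := hrest
      rw [List.sublist_replicate_iff] at h1 h2 h3
      obtain ⟨i, hi, rfl⟩ := h1
      obtain ⟨j, hj, rfl⟩ := h2
      obtain ⟨l, hl, rfl⟩ := h3
      simp only [List.length_append, List.length_replicate] at hlen
      refine ⟨(i, l), ⟨hi, hl⟩, ?_⟩
      have hjv : k - i - l = j := by omega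
      simp only [hf, hjv]
    · rintro ⟨⟨i, l⟩, ⟨hi, hl⟩, rfl⟩
      constructor
      · rw [List.append_assoc]
        refine List.Sublist.append ?_ (List.Sublist.append ?_ ?_) <;>
          exact (List.replicate_sublist_replicate _).2 (by omega)
      · simp only [hf, List.length_append, List.length_replicate]
        omega
  rw [hset, Finset.card_image_of_injOn, Finset.card_product, Nat.card_Iic, sq]
  rintro ⟨i, l⟩ hp ⟨i', l'⟩ hp' heq
  have hp1 := Finset.mem_product.1 hp
  have hp2 := Finset.mem_product.1 hp'
  simp only [Finset.mem_Iic] at hp1 hp2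
  have hcb := congrArg (List.count wb) heq
  have hca := congrArg (List.count wa) heq
  simp only [hf, count_rep] at hcb hca
  simp only [wa, wb, if_true, if_false, reduceIte] at hcb hca
  -- hcb : k - i - l = k - i' - l', hca : i + l = i' + l'
  by_cases hz : k - i - l = 0
  · simp only [Prod.mk.injEq]
    omega
  · have htw := congrArg (List.takeWhile (· == wa)) heq
    rw [hf] at htw
    rw [takeWhile_rep _ _ _ (by omega), takeWhile_rep _ _ _ (by omega)] at htw
    have : i = i' := by
      have := congrArg List.length htw
      simpa using this
    simp only [Prod.mk.injEq]
    omega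
end

section
/- Let w be a prefix of the infinite word (ab)^ω of length n. Then for every ℓ ≤ n, the number of distinct subsequences of w of length ℓ equals the sum over j from 0 to n−ℓ of the binomial coefficient C(ℓ, n−ℓ−j). In particular if ℓ ≤ n−ℓ then w has exactly 2^ℓ distinct subsequences of length ℓ. -/
/-- The prefix of length `n` of the infinite word `(ab)^ω`. -/
def altPrefix (n : ℕ) : List Bool :=
  (List.range n).map (fun i => if i % 2 = 0 then wa else wb)

/-- Alternating word of length `n` starting with `c`. -/
def alt : Bool → ℕ → List Bool
  | _, 0 => []
  | c, n+1 => c :: alt (!c) n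

/-- Minimal length of a prefix of the alternating word starting with `c`
containing `u` as a subsequence. -/
def need : Bool → List Bool → ℕ
  | _, [] => 0
  | c, d :: l => (if d = c then 1 else 2) + need (!d) l

lemma length_le_need (u : List Bool) : ∀ c, u.length ≤ need c u := by
  induction u with
  | nil => intro c; simp [need]
  | cons d l ih =>
    intro c
    have := ih (!d)
    simp only [need, List.length_cons]
    split <;> omega

lemma need_flip (c : Bool) (u : List Bool) : need c u ≤ need (!c) u + 1 := by
  cases u with
  | nil => simp [need]
  | cons d l => cases c <;> cases d <;> simp [need] <;> omega

lemma sublist_alt_of_need : ∀ (u : List Bool) (c : Bool) (n : ℕ),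
    need c u ≤ n → List.Sublist u (alt c n) := by
  intro u
  induction u with
  | nil => intro c n _; exact List.nil_sublist _
  | cons d l ih =>
    intro c n h
    by_cases hdc : d = c
    · subst hdc
      have h1 : need d (d :: l) = 1 + need (!d) l := by simp [need]
      obtain ⟨m, rfl⟩ : ∃ m, n = m + 1 := ⟨n - 1, by omega⟩
      have : alt d (m + 1) = d :: alt (!d) m := rfl
      rw [this]
      exact (ih (!d) m (by omega)).cons₂ d
    · have h1 : need c (d :: l) = 2 + need (!d) l := by simp [need, hdc]
      obtain ⟨m, rfl⟩ : ∃ m, n = m + 2 := ⟨n - 2, by omega⟩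
      have hc : c = !d := by cases c <;> cases d <;> simp_all
      subst hc
      have : alt (!d) (m + 2) = (!d) :: d :: alt (!d) m := by
        simp [alt]
      rw [this]
      exact ((ih (!d) m (by omega)).cons₂ d).cons (!d)

lemma need_le_of_sublist : ∀ (n : ℕ) (c : Bool) (u : List Bool),
    List.Sublist u (alt c n) → need c u ≤ n := by
  intro n
  induction n with
  | zero =>
    intro c u h
    simp [alt] at h
    subst h
    simp [need]
  | succ n ih =>
    intro c u h
    rw [show alt c (n + 1) = c :: alt (!c) n from rfl] at h
    cases h with
    | cons _ h' =>
      have h1 := ih (!c) u h'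
      have h2 := need_flip c u
      omega
    | cons_cons _ h' =>
      have h1 := ih (!c) _ h'
      simp [need]
      omega

lemma altPrefix_eq_alt (n : ℕ) : altPrefix n = alt false n := by
  suffices H : ∀ n (b : Bool),
      alt b n = (List.range n).map (fun i => if i % 2 = 0 then b else !b) by
    rw [altPrefix, H n false]
    rfl
  intro n
  induction n with
  | zero => intro b; simp [alt]
  | succ n ih =>
    intro b
    rw [List.range_succ_eq_map]
    simp only [alt, List.map_cons, List.map_map]
    rw [ih (!b)]
    simp only [Bool.not_not, if_true]
    have htail : List.map (fun i => if i % 2 = 0 then !b else b) (List.range n)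
        = List.map ((fun i => if i % 2 = 0 then b else !b) ∘ Nat.succ) (List.range n) := by
      apply List.map_congr_left
      intro i _
      simp only [Function.comp_apply, Nat.succ_eq_add_one]
      rcases Nat.mod_two_eq_zero_or_one i with h | h <;>
        · have h2 : (i + 1) % 2 = 1 - i % 2 := by omega
          simp [h, h2]
    rw [htail]

lemma mem_scatfact_s18 (ℓ n : ℕ) (u : List Bool) :
    u ∈ ScatFact ℓ (altPrefix n) ↔ u.length = ℓ ∧ need false u ≤ n := by
  rw [altPrefix_eq_alt]
  simp only [ScatFact, List.mem_toFinset, List.mem_filter, List.mem_sublists,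
    altPrefix_eq_alt, decide_eq_true_eq]
  constructor
  · rintro ⟨h1, h2⟩
    exact ⟨h2, need_le_of_sublist n false u h1⟩
  · rintro ⟨h1, h2⟩
    exact ⟨sublist_alt_of_need u false n h2, h1⟩

/-- All binary words of length `n`. -/
def enum : ℕ → Finset (List Bool)
  | 0 => {[]}
  | n+1 => ((enum n).image (List.cons false)) ∪ ((enum n).image (List.cons true))

lemma mem_enum : ∀ (n : ℕ) (u : List Bool), u ∈ enum n ↔ u.length = n := by
  intro n
  induction n with
  | zero => intro u; cases u <;> simp [enum]
  | succ n ih =>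
    intro u
    cases u with
    | nil => simp [enum]
    | cons d l =>
      cases d <;> simp [enum, ih]

lemma card_filter_need : ∀ (ℓ : ℕ) (c : Bool) (k : ℕ),
    ((enum ℓ).filter (fun u => need c u = ℓ + k)).card = Nat.choose ℓ k := by
  intro ℓ
  induction ℓ with
  | zero =>
    intro c k
    cases k <;> simp [enum, need, Finset.filter_singleton]
  | succ ℓ ih =>
    intro c k
    have hinjf : Function.Injective (List.cons false) := fun a b h => by
      injection h
    have hinjt : Function.Injective (List.cons true) := fun a b h => by
      injection h
    have hdisj : Disjoint
        (((enum ℓ).image (List.cons false)).filter (fun u => need c u = ℓ + 1 + k))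
        (((enum ℓ).image (List.cons true)).filter (fun u => need c u = ℓ + 1 + k)) := by
      rw [Finset.disjoint_left]
      intro a ha hb
      simp only [Finset.mem_filter, Finset.mem_image] at ha hb
      obtain ⟨⟨x, _, rfl⟩, _⟩ := ha
      obtain ⟨⟨y, _, hy⟩, _⟩ := hb
      simp at hy
    rw [show enum (ℓ + 1) =
        ((enum ℓ).image (List.cons false)) ∪ ((enum ℓ).image (List.cons true)) from rfl,
      Finset.filter_union, Finset.card_union_of_disjoint hdisj,
      Finset.filter_image, Finset.filter_image,
      Finset.card_image_of_injective _ hinjf, Finset.card_image_of_injective _ hinjt]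
    -- part with head matching c contributes choose ℓ k, other head choose ℓ (k-1)
    have keymatch : ∀ d : Bool,
        ((enum ℓ).filter (fun l => need d (d :: l) = ℓ + 1 + k)).card = Nat.choose ℓ k := by
      intro d
      have hrw : (enum ℓ).filter (fun l => need d (d :: l) = ℓ + 1 + k)
          = (enum ℓ).filter (fun l => need (!d) l = ℓ + k) := by
        apply Finset.filter_congr
        intro l _
        have h1 : need d (d :: l) = 1 + need (!d) l := by simp [need]
        rw [h1]
        omega
      rw [hrw]
      exact ih (!d) k
    have keymiss : ∀ d : Bool,
        ((enum ℓ).filter (fun l => need (!d) (d :: l) = ℓ + 1 + k)).card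
          = Nat.choose ℓ (k - 1) - (if k = 0 then 1 else 0) := by
      intro d
      cases k with
      | zero =>
        have : ((enum ℓ).filter (fun l => need (!d) (d :: l) = ℓ + 1 + 0)) = ∅ := by
          rw [Finset.filter_eq_empty_iff]
          intro l hl
          have h1 : l.length = ℓ := (mem_enum ℓ l).1 hl
          have h2 := length_le_need l (!d)
          have h3 : need (!d) (d :: l) = 2 + need (!d) l := by
            cases d <;> simp [need]
          omega
        rw [this]
        simp
      | succ k' =>
        have hrw : (enum ℓ).filter (fun l => need (!d) (d :: l) = ℓ + 1 + (k' + 1))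
            = (enum ℓ).filter (fun l => need (!d) l = ℓ + k') := by
          apply Finset.filter_congr
          intro l _
          have h1 : need (!d) (d :: l) = 2 + need (!d) l := by
            cases d <;> simp [need]
          rw [h1]
          omega
        rw [hrw, ih (!d) k']
        simp
    cases c with
    | false =>
      rw [keymatch false]
      have := keymiss true
      simp only [Bool.not_true] at this
      rw [this]
      cases k with
      | zero => simp
      | succ k' => simp [Nat.choose_succ_succ, Nat.add_comm]
    | true =>
      rw [keymatch true]
      have := keymiss false
      simp only [Bool.not_false] at this
      rw [this]
      cases k with
      | zero => simp
      | succ k' => simp [Nat.choose_succ_succ, Nat.add_comm]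

lemma scat_card (ℓ n : ℕ) (h : ℓ ≤ n) :
    (ScatFact ℓ (altPrefix n)).card
      = ∑ k ∈ Finset.range (n - ℓ + 1), Nat.choose ℓ k := by
  have hset : ScatFact ℓ (altPrefix n)
      = (Finset.range (n - ℓ + 1)).biUnion
          (fun k => (enum ℓ).filter (fun u => need false u = ℓ + k)) := by
    ext u
    simp only [mem_scatfact_s18, Finset.mem_biUnion, Finset.mem_range, Finset.mem_filter,
      mem_enum]
    constructor
    · rintro ⟨h1, h2⟩
      have h3 := length_le_need u false
      refine ⟨need false u - ℓ, by omega, h1, by omega⟩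
    · rintro ⟨k, hk, h1, h2⟩
      exact ⟨h1, by omega⟩
  rw [hset, Finset.card_biUnion]
  · exact Finset.sum_congr rfl fun k _ => card_filter_need ℓ false k
  · intro i _ j _ hij
    simp only [Function.onFun, Finset.disjoint_left]
    intro a ha hb
    simp only [Finset.mem_filter] at ha hb
    omega

theorem scatfact_alt_prefix (n : ℕ) :
    (∀ ℓ : ℕ, ℓ ≤ n →
      (ScatFact ℓ (altPrefix n)).card
        = ∑ j ∈ Finset.range (n - ℓ + 1), Nat.choose ℓ (n - ℓ - j)) ∧
    (∀ ℓ : ℕ, ℓ ≤ n - ℓ → (ScatFact ℓ (altPrefix n)).card = 2 ^ ℓ) := by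
  have main : ∀ ℓ : ℕ, ℓ ≤ n →
      (ScatFact ℓ (altPrefix n)).card
        = ∑ j ∈ Finset.range (n - ℓ + 1), Nat.choose ℓ (n - ℓ - j) := by
    intro ℓ hℓ
    rw [scat_card ℓ n hℓ]
    have := Finset.sum_range_reflect (fun j => Nat.choose ℓ j) (n - ℓ + 1)
    rw [← this]
    refine Finset.sum_congr rfl fun j hj => ?_
    congr 1 <;> omega
  refine ⟨main, fun ℓ hℓ => ?_⟩
  have hℓn : ℓ ≤ n := by omega
  rw [scat_card ℓ n hℓn]
  rw [← Nat.sum_range_choose ℓ]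
  symm
  apply Finset.sum_subset
  · exact Finset.range_subset_range.2 (by omega)
  · intro x _ hx
    simp only [Finset.mem_range, not_lt] at hx
    exact Nat.choose_eq_zero_of_lt (by omega)
end
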